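/- Assume every vertex of G lies on some directed path from s to t. A set C of edges of G is an (s,t)-min-cut of G if and only if every edge of C is critical and C, regarded as a set of edges of the strip graph D_λ, is an antichain that is maximal among the antichains of D_λ consisting of critical edges. -/

import Mathlib

open Finset

/-- A finite directed multigraph on vertex type `V` with edge type `E`:
each edge `e` has a source `src e` and a target `tgt e`. -/
structure Digraph' (V E : Type) where
  src : E → V
  tgt : E → V

namespace Digraph'

variable {V E : Type} [Fintype V] [DecidableEq V] [Fintype E] [DecidableEq E]

/-- `h : E → ℕ` satisfies flow conservation at every vertex other than `s` and `t`:
the sum over incoming edges equals the sum over outgoing edges. -/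
def Conserves (G : Digraph' V E) (s t : V) (h : E → ℕ) : Prop :=
  ∀ v : V, v ≠ s → v ≠ t →
    ∑ e ∈ univ.filter (fun e => G.tgt e = v), h e =
      ∑ e ∈ univ.filter (fun e => G.src e = v), h e

/-- The value of `h`: the net flow out of `s`. -/
def flowValue (G : Digraph' V E) (s : V) (h : E → ℕ) : ℤ :=
  (∑ e ∈ univ.filter (fun e => G.src e = s), (h e : ℤ)) -
    ∑ e ∈ univ.filter (fun e => G.tgt e = s), (h e : ℤ)

/-- An `(s,t)`-flow of a unit-capacity digraph: a `{0,1}`-valued function on edges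
satisfying flow conservation at every vertex other than `s` and `t`. -/
def IsFlow (G : Digraph' V E) (s t : V) (f : E → ℕ) : Prop :=
  (∀ e, f e ≤ 1) ∧ G.Conserves s t f

/-- One step along an edge not belonging to `F`. -/
def stepAvoid (G : Digraph' V E) (F : Finset E) (u v : V) : Prop :=
  ∃ e, e ∉ F ∧ G.src e = u ∧ G.tgt e = v

/-- Reachability by a directed path using no edge of `F`. -/
def ReachAvoid (G : Digraph' V E) (F : Finset E) : V → V → Prop :=
  Relation.ReflTransGen (G.stepAvoid F)

/-- `C` is an `(s,t)`-cut: after deleting the edges of `C` there is no directed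
path from `s` to `t`. -/
def IsCut (G : Digraph' V E) (s t : V) (C : Finset E) : Prop :=
  ¬ G.ReachAvoid C s t

/-- An `(s,t)`-min-cut: an `(s,t)`-cut of minimum cardinality. -/
def IsMinCut (G : Digraph' V E) (s t : V) (C : Finset E) : Prop :=
  G.IsCut s t C ∧ ∀ C' : Finset E, G.IsCut s t C' → C.card ≤ C'.card

/-- A minimal `(s,t)`-cut: no proper subset of it is an `(s,t)`-cut. -/
def IsMinimalCut (G : Digraph' V E) (s t : V) (C : Finset E) : Prop :=
  G.IsCut s t C ∧ ∀ C' : Finset E, C' ⊂ C → ¬ G.IsCut s t C'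

/-- An edge is critical if it belongs to some `(s,t)`-min-cut. -/
def Critical (G : Digraph' V E) (s t : V) (e : E) : Prop :=
  ∃ C : Finset E, G.IsMinCut s t C ∧ e ∈ C

/-- `m` is the maximum `(s,t)`-flow value of `G − F`, i.e. the largest value of an
`(s,t)`-flow of `G` vanishing on every edge of `F`. -/
def IsMaxFlowValue (G : Digraph' V E) (s t : V) (F : Finset E) (m : ℤ) : Prop :=
  (∃ f, G.IsFlow s t f ∧ (∀ e ∈ F, f e = 0) ∧ G.flowValue s f = m) ∧
    ∀ f, G.IsFlow s t f → (∀ e ∈ F, f e = 0) → G.flowValue s f ≤ m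

/-- The residual graph `G_f` of a `{0,1}`-flow `f`: each edge with `f e = 1`
is reversed, each edge with `f e = 0` is kept as is. -/
def residual (G : Digraph' V E) (f : E → ℕ) : Digraph' V E where
  src e := if f e = 1 then G.tgt e else G.src e
  tgt e := if f e = 1 then G.src e else G.tgt e

end Digraph'

namespace Digraph'

variable {V E : Type} [Fintype V] [DecidableEq V] [Fintype E] [DecidableEq E]

/-- An `(s,t)`-min-cut partition: `(A, Aᶜ)` with `s ∈ A`, `t ∉ A`, and exactly `λ`
edges of `G` directed from `A` to `Aᶜ`. -/
def IsMinCutPartition (G : Digraph' V E) (s t : V) (lam : ℕ) (A : Finset V) : Prop :=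
  s ∈ A ∧ t ∉ A ∧ (univ.filter (fun e => G.src e ∈ A ∧ G.tgt e ∉ A)).card = lam

/-- Two vertices are equivalent if every `(s,t)`-min-cut partition has them on the
same side. -/
def VEquiv (G : Digraph' V E) (s t : V) (lam : ℕ) (x y : V) : Prop :=
  ∀ A : Finset V, G.IsMinCutPartition s t lam A → (x ∈ A ↔ y ∈ A)

/-- An inter-cluster edge: its endpoints are separated by some min-cut partition. -/
def InterCluster (G : Digraph' V E) (s t : V) (lam : ℕ) (e : E) : Prop :=
  ¬ G.VEquiv s t lam (G.src e) (G.tgt e)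

/-- `u` and `v` are the tail and head of edge `e` in the strip graph `D_λ`:
critical edges keep their orientation, non-critical edges are reversed. -/
def DEnds (G : Digraph' V E) (s t : V) (e : E) (u v : V) : Prop :=
  (G.Critical s t e ∧ u = G.src e ∧ v = G.tgt e) ∨
    (¬ G.Critical s t e ∧ u = G.tgt e ∧ v = G.src e)

/-- One step in the strip graph `D_λ` (on representatives): either stay within an
equivalence class, or traverse an inter-cluster edge in its `D_λ`-orientation. -/
def DStep (G : Digraph' V E) (s t : V) (lam : ℕ) (u v : V) : Prop :=
  G.VEquiv s t lam u v ∨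
    ∃ e : E, G.InterCluster s t lam e ∧ G.DEnds s t e u v

/-- Reachability in the strip graph `D_λ` (between classes, via representatives). -/
def DReach (G : Digraph' V E) (s t : V) (lam : ℕ) : V → V → Prop :=
  Relation.ReflTransGen (G.DStep s t lam)

/-- The partial order on edges of `D_λ`: `e ≤ e'` iff `e = e'` or some directed
path of `D_λ` from the class of `s` to the class of `t` traverses `e` before `e'`. -/
def EdgeLE (G : Digraph' V E) (s t : V) (lam : ℕ) (e e' : E) : Prop :=
  e = e' ∨ ∃ u v u' v' : V, G.DEnds s t e u v ∧ G.DEnds s t e' u' v' ∧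
    G.DReach s t lam s u ∧ G.DReach s t lam v u' ∧ G.DReach s t lam v' t

/-- A set of edges of `G`, regarded as edges of `D_λ`, is an antichain if its
elements are pairwise incomparable under `EdgeLE`. -/
def EdgeAntichain (G : Digraph' V E) (s t : V) (lam : ℕ) (C : Finset E) : Prop :=
  ∀ e ∈ C, ∀ e' ∈ C, G.EdgeLE s t lam e e' → e = e'

end Digraph'
open scoped Classical
set_option linter.unusedSectionVars false

namespace Digraph'

variable {V E : Type} [Fintype V] [DecidableEq V] [Fintype E] [DecidableEq E]

/-- Chains of edges. -/
def Chn (G : Digraph' V E) : List E → V → V → Prop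
  | [], u, v => u = v
  | e :: l, u, v => G.src e = u ∧ G.Chn l (G.tgt e) v

def cutE (G : Digraph' V E) (A : Finset V) : Finset E :=
  univ.filter (fun e => G.src e ∈ A ∧ G.tgt e ∉ A)

def cutE' (G : Digraph' V E) (A : Finset V) : Finset E :=
  univ.filter (fun e => G.src e ∉ A ∧ G.tgt e ∈ A)

variable {G : Digraph' V E} {s t u v w : V}

lemma chn_append {l₁ l₂ : List E} (h1 : G.Chn l₁ u w) (h2 : G.Chn l₂ w v) :
    G.Chn (l₁ ++ l₂) u v := by
  induction l₁ generalizing u with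
  | nil => cases h1; exact h2
  | cons e l ih => exact ⟨h1.1, ih h1.2⟩

lemma chn_split {l₁ l₂ : List E} (h : G.Chn (l₁ ++ l₂) u v) :
    ∃ w, G.Chn l₁ u w ∧ G.Chn l₂ w v := by
  induction l₁ generalizing u with
  | nil => exact ⟨u, rfl, h⟩
  | cons e l ih =>
    obtain ⟨w, h1, h2⟩ := ih h.2
    exact ⟨w, ⟨h.1, h1⟩, h2⟩

lemma reach_chn {F : Finset E} (h : G.ReachAvoid F u v) :
    ∃ l : List E, G.Chn l u v ∧ ∀ e ∈ l, e ∉ F := by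
  induction h with
  | refl => exact ⟨[], rfl, by simp⟩
  | tail hab hbc ih =>
    obtain ⟨l, hl, hF⟩ := ih
    obtain ⟨e, heF, hs, ht⟩ := hbc
    refine ⟨l ++ [e], chn_append hl ⟨hs, ht⟩, ?_⟩
    intro e' he'
    rcases List.mem_append.mp he' with h' | h'
    · exact hF e' h'
    · simpa using (by simpa using h') ▸ heF

lemma split_dup : ∀ (l : List E), ¬ l.Nodup →
    ∃ (a : E) (l₁ l₂ l₃ : List E), l = l₁ ++ a :: (l₂ ++ a :: l₃) := by
  intro l
  induction l with
  | nil => simp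
  | cons x xs ih =>
    intro hl
    by_cases hx : x ∈ xs
    · obtain ⟨s', t', rfl⟩ := List.append_of_mem hx
      exact ⟨x, [], s', t', rfl⟩
    · have hxs : ¬ xs.Nodup := fun hn => hl (List.nodup_cons.mpr ⟨hx, hn⟩)
      obtain ⟨a, l₁, l₂, l₃, rfl⟩ := ih hxs
      exact ⟨a, x :: l₁, l₂, l₃, rfl⟩

lemma chn_nodup {p : E → Prop} :
    ∀ (n : ℕ) (l : List E) (u v : V), l.length ≤ n → G.Chn l u v → (∀ e ∈ l, p e) →
      ∃ l', G.Chn l' u v ∧ (∀ e ∈ l', p e) ∧ l'.Nodup := by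
  intro n
  induction n with
  | zero =>
    intro l u v hn hc hp
    have : l = [] := List.length_eq_zero_iff.mp (Nat.le_zero.mp hn)
    exact ⟨l, hc, hp, by simp [this]⟩
  | succ n ih =>
    intro l u v hn hc hp
    by_cases hnd : l.Nodup
    · exact ⟨l, hc, hp, hnd⟩
    · obtain ⟨a, l₁, l₂, l₃, rfl⟩ := split_dup l hnd
      obtain ⟨w₁, hc₁, hc₂⟩ := chn_split hc
      obtain ⟨hsa, hc₃⟩ := hc₂
      obtain ⟨w₂, hc₄, hc₅⟩ := chn_split (l₁ := l₂) hc₃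
      obtain ⟨hsa₂, hc₆⟩ := hc₅
      have hc' : G.Chn (l₁ ++ a :: l₃) u v :=
        chn_append hc₁ ⟨hsa, hc₆⟩
      refine ih (l₁ ++ a :: l₃) u v ?_ hc' ?_
      · have := hn; simp [List.length_append] at this ⊢; omega
      · intro e he
        apply hp
        simp at he ⊢
        tauto

lemma closed_chn_nodup {p : E → Prop} :
    ∀ (n : ℕ) (l : List E) (v : V), l.length ≤ n → l ≠ [] →
      G.Chn l v v → (∀ e ∈ l, p e) →
      ∃ (l' : List E) (v' : V), l' ≠ [] ∧ l'.Nodup ∧ G.Chn l' v' v' ∧ ∀ e ∈ l', p e := by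
  intro n
  induction n with
  | zero =>
    intro l v hn hne
    exact absurd (List.length_eq_zero_iff.mp (Nat.le_zero.mp hn)) hne
  | succ n ih =>
    intro l v hn hne hc hp
    by_cases hnd : l.Nodup
    · exact ⟨l, v, hne, hnd, hc, hp⟩
    · obtain ⟨a, l₁, l₂, l₃, rfl⟩ := split_dup l hnd
      obtain ⟨w₁, hc₁, hc₂⟩ := chn_split hc
      obtain ⟨hsa, hc₃⟩ := hc₂
      obtain ⟨w₂, hc₄, hc₅⟩ := chn_split (l₁ := l₂) hc₃
      obtain ⟨hsa₂, hc₆⟩ := hc₅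
      have hclosed : G.Chn (a :: l₂) (G.src a) (G.src a) := ⟨rfl, hsa₂ ▸ hc₄⟩
      refine ih (a :: l₂) (G.src a) ?_ (by simp) hclosed ?_
      · have := hn; simp [List.length_append] at this ⊢; omega
      · intro e he
        apply hp
        simp at he ⊢
        tauto

end Digraph'
namespace Digraph'

set_option linter.unusedSectionVars false

variable {V E : Type} [Fintype V] [DecidableEq V] [Fintype E] [DecidableEq E]
variable {G : Digraph' V E} {s t u v w : V}

lemma chn_sum (g : V → ℤ) :
    ∀ (l : List E) (u v : V), G.Chn l u v →
      (l.map (fun e => g (G.src e))).sum + g v = (l.map (fun e => g (G.tgt e))).sum + g u := by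
  intro l
  induction l with
  | nil => intro u v h; cases h; simp
  | cons e l ih =>
    intro u v h
    have h2 := ih (G.tgt e) v h.2
    simp only [List.map_cons, List.sum_cons, h.1]
    omega

lemma sum_ite_mem_list (l : List E) (hl : l.Nodup) (g : E → ℤ) :
    ∑ e ∈ univ, (if e ∈ l then g e else 0) = (l.map g).sum := by
  induction l with
  | nil => simp
  | cons x xs ih =>
    have hx : x ∉ xs := (List.nodup_cons.mp hl).1
    have h2 := ih (List.nodup_cons.mp hl).2
    have hsplit : ∀ e : E, (if e ∈ x :: xs then g e else 0) =
        (if e = x then g e else 0) + (if e ∈ xs then g e else 0) := by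
      intro e
      by_cases h1 : e = x
      · subst h1; simp [hx]
      · by_cases h2 : e ∈ xs <;> simp [h1, h2]
    rw [Finset.sum_congr rfl (fun e _ => hsplit e), Finset.sum_add_distrib, h2,
      Finset.sum_ite_eq' univ x g]
    simp

lemma sum_filter_ite_mem (l : List E) (hl : l.Nodup) (p : E → Prop) [DecidablePred p]
    (g : E → ℤ) :
    ∑ e ∈ univ.filter p, (if e ∈ l then g e else 0)
      = (l.map (fun e => if p e then g e else 0)).sum := by
  rw [Finset.sum_filter, ← sum_ite_mem_list l hl]
  refine Finset.sum_congr rfl fun e _ => ?_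
  by_cases hp : p e <;> by_cases hm : e ∈ l <;> simp [hp, hm]

lemma crossFlow {h : E → ℕ} (hc : G.Conserves s t h)
    {A : Finset V} (hs : s ∈ A) (ht : t ∉ A) :
    G.flowValue s h = (∑ e ∈ G.cutE A, (h e : ℤ)) - ∑ e ∈ G.cutE' A, (h e : ℤ) := by
  have key : ∀ v ∈ A, v ≠ s →
      ((∑ e ∈ univ.filter (fun e => G.src e = v), (h e : ℤ)) -
        ∑ e ∈ univ.filter (fun e => G.tgt e = v), (h e : ℤ)) = 0 := by
    intro v hv hvs
    have hvt : v ≠ t := fun hh => ht (hh ▸ hv)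
    have h0 := hc v hvs hvt
    have h1 : ((∑ e ∈ univ.filter (fun e => G.tgt e = v), h e : ℕ) : ℤ) =
        ((∑ e ∈ univ.filter (fun e => G.src e = v), h e : ℕ) : ℤ) := by rw [h0]
    push_cast at h1
    omega
  have hsum : G.flowValue s h =
      ∑ v ∈ A, ((∑ e ∈ univ.filter (fun e => G.src e = v), (h e : ℤ)) -
        ∑ e ∈ univ.filter (fun e => G.tgt e = v), (h e : ℤ)) := by
    rw [Finset.sum_eq_single_of_mem s hs (fun v hv hvs => key v hv hvs)]
    rfl
  have hrearr : ∀ φ : E → V, ∑ v ∈ A, ∑ e ∈ univ.filter (fun e => φ e = v), (h e : ℤ)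
      = ∑ e ∈ univ, (if φ e ∈ A then (h e : ℤ) else 0) := by
    intro φ
    have : ∀ v, ∑ e ∈ univ.filter (fun e => φ e = v), (h e : ℤ)
        = ∑ e ∈ univ, (if φ e = v then (h e : ℤ) else 0) := fun v => Finset.sum_filter _ _
    rw [Finset.sum_congr rfl (fun v _ => this v), Finset.sum_comm]
    refine Finset.sum_congr rfl fun e _ => ?_
    exact Finset.sum_ite_eq A (φ e) (fun _ => (h e : ℤ))
  rw [hsum, Finset.sum_sub_distrib, hrearr G.src, hrearr G.tgt]
  have : ∀ e : E, (if G.src e ∈ A then (h e : ℤ) else 0) - (if G.tgt e ∈ A then (h e : ℤ) else 0)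
      = (if G.src e ∈ A ∧ G.tgt e ∉ A then (h e : ℤ) else 0)
        - (if G.src e ∉ A ∧ G.tgt e ∈ A then (h e : ℤ) else 0) := by
    intro e
    by_cases h1 : G.src e ∈ A <;> by_cases h2 : G.tgt e ∈ A <;> simp [h1, h2]
  rw [← Finset.sum_sub_distrib, Finset.sum_congr rfl (fun e _ => this e),
    Finset.sum_sub_distrib, cutE, cutE', Finset.sum_filter, Finset.sum_filter]

end Digraph'
namespace Digraph'

set_option linter.unusedSectionVars false

variable {V E : Type} [Fintype V] [DecidableEq V] [Fintype E] [DecidableEq E]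
variable {G : Digraph' V E} {s t u v w : V}

lemma mem_cutE {A : Finset V} {e : E} :
    e ∈ G.cutE A ↔ G.src e ∈ A ∧ G.tgt e ∉ A := by simp [cutE]

lemma mem_cutE' {A : Finset V} {e : E} :
    e ∈ G.cutE' A ↔ G.src e ∉ A ∧ G.tgt e ∈ A := by simp [cutE']

lemma mem_of_reach_cutE {A : Finset V} (hs : s ∈ A) (h : G.ReachAvoid (G.cutE A) s v) :
    v ∈ A := by
  induction h with
  | refl => exact hs
  | tail hab hbc ih =>
    obtain ⟨e, heF, hsrc, htgt⟩ := hbc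
    by_contra hv
    exact heF (mem_cutE.mpr ⟨hsrc ▸ ih, htgt ▸ hv⟩)

lemma cut_of_partition {A : Finset V} (hs : s ∈ A) (ht : t ∉ A) :
    G.IsCut s t (G.cutE A) := fun h => ht (mem_of_reach_cutE hs h)

lemma weak_duality {h : E → ℕ} (hf : G.IsFlow s t h) {C : Finset E} (hC : G.IsCut s t C) :
    G.flowValue s h ≤ C.card := by
  set A : Finset V := univ.filter (fun v => G.ReachAvoid C s v) with hA
  have hsA : s ∈ A := by simp [hA]; exact Relation.ReflTransGen.refl
  have htA : t ∉ A := by simp [hA]; exact hC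
  rw [crossFlow hf.2 hsA htA]
  have hsub : G.cutE A ⊆ C := by
    intro e he
    rw [mem_cutE] at he
    by_contra heC
    have hsrcA : G.ReachAvoid C s (G.src e) := by
      have := he.1; rw [hA] at this; simpa using this
    have : G.ReachAvoid C s (G.tgt e) := hsrcA.tail ⟨e, heC, rfl, rfl⟩
    exact he.2 (by simp [hA]; exact this)
  have h1 : (∑ e ∈ G.cutE A, (h e : ℤ)) ≤ (G.cutE A).card := by
    calc (∑ e ∈ G.cutE A, (h e : ℤ)) ≤ ∑ _e ∈ G.cutE A, (1 : ℤ) :=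
          Finset.sum_le_sum (fun e _ => by exact_mod_cast hf.1 e)
      _ = (G.cutE A).card := by simp
  have h2 : (0 : ℤ) ≤ ∑ e ∈ G.cutE' A, (h e : ℤ) :=
    Finset.sum_nonneg (fun e _ => by positivity)
  have h3 : ((G.cutE A).card : ℤ) ≤ C.card := by
    exact_mod_cast Finset.card_le_card hsub
  omega

/-- A nodup chain from `s` to `t` yields a unit flow. -/
lemma flow_of_chain {l : List E} (hl : l.Nodup) (hc : G.Chn l s t) (hst : s ≠ t) :
    G.IsFlow s t (fun e => if e ∈ l then 1 else 0) ∧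
      G.flowValue s (fun e => if e ∈ l then 1 else 0) = 1 := by
  set h : E → ℕ := fun e => if e ∈ l then 1 else 0 with hh
  have hcast : ∀ (p : E → Prop) [DecidablePred p],
      ∑ e ∈ univ.filter p, (h e : ℤ) = (l.map (fun e => if p e then (1:ℤ) else 0)).sum := by
    intro p _
    rw [← sum_filter_ite_mem l hl p (fun _ => (1:ℤ))]
    refine Finset.sum_congr rfl fun e _ => ?_
    by_cases hm : e ∈ l <;> simp [hh, hm]
  have key : ∀ x : V,
      (∑ e ∈ univ.filter (fun e => G.src e = x), (h e : ℤ)) + (if t = x then 1 else 0)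
        = (∑ e ∈ univ.filter (fun e => G.tgt e = x), (h e : ℤ)) + (if s = x then 1 else 0) := by
    intro x
    rw [hcast, hcast]
    exact chn_sum (fun y => if y = x then (1:ℤ) else 0) l s t hc
  constructor
  · constructor
    · intro e; simp only [hh]; split <;> omega
    · intro x hxs hxt
      have := key x
      simp [Ne.symm hxs, Ne.symm hxt] at this
      have hnat : ((∑ e ∈ univ.filter (fun e => G.tgt e = x), h e : ℕ) : ℤ) =
          ((∑ e ∈ univ.filter (fun e => G.src e = x), h e : ℕ) : ℤ) := by
        push_cast; omega
      exact_mod_cast hnat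
  · have := key s
    simp [hst, Ne.symm hst] at this
    unfold flowValue
    omega

end Digraph'
namespace Digraph'

set_option linter.unusedSectionVars false
set_option maxHeartbeats 1000000

variable {V E : Type} [Fintype V] [DecidableEq V] [Fintype E] [DecidableEq E]

/-- indicator flow of an edge set -/
def ind (S : Finset E) : E → ℕ := fun e => if e ∈ S then 1 else 0

variable {G : Digraph' V E} {s t u v w : V} {lam : ℕ}

lemma ind_le_one (S : Finset E) (e : E) : ind S e ≤ 1 := by unfold ind; split <;> omega

lemma ind_eq_one {S : Finset E} {e : E} : ind S e = 1 ↔ e ∈ S := by unfold ind; split <;> simp_all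

lemma filter_sum_shift {h h' : E → ℕ} {l : List E} (hl : l.Nodup) (d : E → ℤ)
    (hcompat : ∀ e, (h' e : ℤ) = (h e : ℤ) + (if e ∈ l then d e else 0))
    (p : E → Prop) [DecidablePred p] :
    ∑ e ∈ univ.filter p, (h' e : ℤ) =
      (∑ e ∈ univ.filter p, (h e : ℤ)) + (l.map (fun e => if p e then d e else 0)).sum := by
  rw [← sum_filter_ite_mem l hl p d, ← Finset.sum_add_distrib]
  exact Finset.sum_congr rfl fun e _ => hcompat e

lemma exists_min_flow (hmax : G.IsMaxFlowValue s t ∅ lam) :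
    ∃ S : Finset E, G.IsFlow s t (ind S) ∧ G.flowValue s (ind S) = lam ∧
      ∀ S' : Finset E, G.IsFlow s t (ind S') → G.flowValue s (ind S') = lam →
        S.card ≤ S'.card := by
  obtain ⟨⟨f₀, hf₀, -, hv₀⟩, -⟩ := hmax
  have hS₀ : ind (univ.filter (fun e => f₀ e = 1)) = f₀ := by
    funext e
    have := hf₀.1 e
    unfold ind
    simp only [Finset.mem_filter, Finset.mem_univ, true_and]
    split <;> omega
  set T : Finset (Finset E) :=
    univ.filter (fun S => G.IsFlow s t (ind S) ∧ G.flowValue s (ind S) = lam) with hT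
  have hne : T.Nonempty := ⟨univ.filter (fun e => f₀ e = 1), by
    simp only [hT, Finset.mem_filter, Finset.mem_univ, true_and, hS₀]
    exact ⟨hf₀, hv₀⟩⟩
  obtain ⟨S, hST, hSmin⟩ := Finset.exists_min_image T Finset.card hne
  simp only [hT, Finset.mem_filter, Finset.mem_univ, true_and] at hST
  refine ⟨S, hST.1, hST.2, fun S' h1 h2 => hSmin S' ?_⟩
  simp only [hT, Finset.mem_filter, Finset.mem_univ, true_and]
  exact ⟨h1, h2⟩

lemma no_cycle {S : Finset E} (hfS : G.IsFlow s t (ind S))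
    (hvS : G.flowValue s (ind S) = lam)
    (hmin : ∀ S' : Finset E, G.IsFlow s t (ind S') → G.flowValue s (ind S') = lam →
      S.card ≤ S'.card) :
    ¬ ∃ (l : List E) (v : V), l ≠ [] ∧ G.Chn l v v ∧ ∀ e ∈ l, e ∈ S := by
  rintro ⟨l₀, v₀, hne₀, hc₀, hp₀⟩
  obtain ⟨l, v, hne, hnd, hc, hp⟩ :=
    closed_chn_nodup (p := (· ∈ S)) l₀.length l₀ v₀ le_rfl hne₀ hc₀ hp₀
  set S' := S \ l.toFinset with hS'
  have hcompat : ∀ e, (ind S' e : ℤ) = (ind S e : ℤ) + (if e ∈ l then (-1 : ℤ) else 0) := by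
    intro e
    by_cases hel : e ∈ l
    · have heS : e ∈ S := hp e hel
      simp [hS', ind, heS, hel]
    · simp [hS', ind, hel]
  have hshift := filter_sum_shift hnd (fun _ => (-1 : ℤ)) hcompat
  have hkey : ∀ x : V, (l.map (fun e => if G.src e = x then (-1:ℤ) else 0)).sum
      = (l.map (fun e => if G.tgt e = x then (-1:ℤ) else 0)).sum := by
    intro x
    have h0 := chn_sum (fun y => if y = x then (-1:ℤ) else 0) l v v hc
    exact add_right_cancel h0
  have hcons : G.Conserves s t (ind S') := by
    intro x hxs hxt
    have h1 := hshift (fun e => G.tgt e = x)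
    have h2 := hshift (fun e => G.src e = x)
    have h3 := hfS.2 x hxs hxt
    have h3' : (∑ e ∈ univ.filter (fun e => G.tgt e = x), (ind S e : ℤ))
        = ∑ e ∈ univ.filter (fun e => G.src e = x), (ind S e : ℤ) := by
      exact_mod_cast congrArg (Nat.cast : ℕ → ℤ) h3
    have : (∑ e ∈ univ.filter (fun e => G.tgt e = x), (ind S' e : ℤ))
        = ∑ e ∈ univ.filter (fun e => G.src e = x), (ind S' e : ℤ) := by
      rw [h1, h2, h3', hkey x]
    exact_mod_cast this
  have hval : G.flowValue s (ind S') = lam := by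
    unfold flowValue
    rw [hshift (fun e => G.src e = s), hshift (fun e => G.tgt e = s), hkey s]
    have : G.flowValue s (ind S) = lam := hvS
    unfold flowValue at this
    omega
  have hcard := hmin S' ⟨fun e => ind_le_one S' e, hcons⟩ hval
  obtain ⟨e₀, he₀⟩ := List.exists_mem_of_ne_nil l hne
  have hss : S' ⊂ S := by
    constructor
    · exact Finset.sdiff_subset
    · intro hsub
      have : e₀ ∈ S' := hsub (hp e₀ he₀)
      simp [hS', List.mem_toFinset, he₀] at this
  exact absurd hcard (not_le.mpr (Finset.card_lt_card hss))

end Digraph'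
namespace Digraph'

set_option linter.unusedSectionVars false
set_option maxHeartbeats 1000000

variable {V E : Type} [Fintype V] [DecidableEq V] [Fintype E] [DecidableEq E]
variable {G : Digraph' V E} {s t u v w : V} {lam : ℕ} {S : Finset E}

lemma map_sum_sub (l : List E) (f g : E → ℤ) :
    (l.map (fun e => f e - g e)).sum = (l.map f).sum - (l.map g).sum := by
  induction l with
  | nil => simp
  | cons x xs ih => simp [ih]; ring

lemma no_augment (hst : s ≠ t) (hmax : G.IsMaxFlowValue s t ∅ lam)
    (hfS : G.IsFlow s t (ind S)) (hvS : G.flowValue s (ind S) = lam) :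
    ¬ (G.residual (ind S)).ReachAvoid ∅ s t := by
  intro hreach
  obtain ⟨l₀, hc₀, -⟩ := reach_chn hreach
  obtain ⟨l, hc, -, hnd⟩ :=
    chn_nodup (p := fun _ => True) l₀.length l₀ s t le_rfl hc₀ (by simp)
  set S'' := (S \ l.toFinset) ∪ (l.toFinset \ S) with hS''
  have hcompat : ∀ e, (ind S'' e : ℤ) =
      (ind S e : ℤ) + (if e ∈ l then 1 - 2 * (ind S e : ℤ) else 0) := by
    intro e
    by_cases hel : e ∈ l <;> by_cases heS : e ∈ S <;>
      simp [hS'', ind, hel, heS] <;> ring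
  have hshift := filter_sum_shift hnd (fun e => 1 - 2 * (ind S e : ℤ)) hcompat
  have hkey : ∀ x : V,
      (l.map (fun e => if G.src e = x then (1 - 2*(ind S e : ℤ)) else 0)).sum
        - (l.map (fun e => if G.tgt e = x then (1 - 2*(ind S e : ℤ)) else 0)).sum
      = (if s = x then 1 else 0) - (if t = x then (1:ℤ) else 0) := by
    intro x
    have h0 := chn_sum (G := G.residual (ind S)) (fun y => if y = x then (1:ℤ) else 0) l s t hc
    have hedge : ∀ e ∈ l,
        (fun e => (if G.src e = x then (1 - 2*(ind S e : ℤ)) else 0)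
          - (if G.tgt e = x then (1 - 2*(ind S e : ℤ)) else 0)) e
        = (fun e => (if ((G.residual (ind S)).src e) = x then (1:ℤ) else 0)
          - (if ((G.residual (ind S)).tgt e) = x then (1:ℤ) else 0)) e := by
      intro e _
      by_cases heS : e ∈ S
      · have h1 : ind S e = 1 := ind_eq_one.mpr heS
        simp only [residual, h1]
        by_cases h2 : G.src e = x <;> by_cases h3 : G.tgt e = x <;> simp [h2, h3] <;> ring
      · have h1 : ind S e = 0 := by simp [ind, heS]
        simp only [residual, h1]
        by_cases h2 : G.src e = x <;> by_cases h3 : G.tgt e = x <;> simp [h2, h3] <;> ring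
    have hmap := List.map_congr_left hedge
    have hsumeq := congrArg List.sum hmap
    rw [map_sum_sub, map_sum_sub] at hsumeq
    rw [hsumeq]
    omega
  have hcons : G.Conserves s t (ind S'') := by
    intro x hxs hxt
    have h1 := hshift (fun e => G.tgt e = x)
    have h2 := hshift (fun e => G.src e = x)
    have h3 := hfS.2 x hxs hxt
    have h3' : (∑ e ∈ univ.filter (fun e => G.tgt e = x), (ind S e : ℤ))
        = ∑ e ∈ univ.filter (fun e => G.src e = x), (ind S e : ℤ) := by
      exact_mod_cast congrArg (Nat.cast : ℕ → ℤ) h3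
    have h4 := hkey x
    have : (∑ e ∈ univ.filter (fun e => G.tgt e = x), (ind S'' e : ℤ))
        = ∑ e ∈ univ.filter (fun e => G.src e = x), (ind S'' e : ℤ) := by
      rw [h1, h2, h3']
      simp [Ne.symm hxs, Ne.symm hxt] at h4
      omega
    exact_mod_cast this
  have hval : G.flowValue s (ind S'') = lam + 1 := by
    unfold flowValue
    rw [hshift (fun e => G.src e = s), hshift (fun e => G.tgt e = s)]
    have h4 := hkey s
    simp [Ne.symm hst] at h4
    have : G.flowValue s (ind S) = lam := hvS
    unfold flowValue at this
    push_cast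
    omega
  have := hmax.2 (ind S'') ⟨fun e => ind_le_one S'' e, hcons⟩ (fun e he => absurd he (by simp))
  rw [hval] at this
  omega

lemma exists_mincut_partition (hst : s ≠ t) (hmax : G.IsMaxFlowValue s t ∅ lam)
    (hfS : G.IsFlow s t (ind S)) (hvS : G.flowValue s (ind S) = lam) :
    ∃ A : Finset V, G.IsMinCutPartition s t lam A := by
  set A : Finset V := univ.filter (fun v => (G.residual (ind S)).ReachAvoid ∅ s v) with hA
  have hsA : s ∈ A := by simp [hA]; exact Relation.ReflTransGen.refl
  have htA : t ∉ A := by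
    simp [hA]
    exact no_augment hst hmax hfS hvS
  have hfwd : ∀ e ∈ G.cutE A, ind S e = 1 := by
    intro e he
    rw [mem_cutE] at he
    by_contra hne
    have h0 : ind S e = 0 := by have := ind_le_one S e; omega
    have hsrcA : (G.residual (ind S)).ReachAvoid ∅ s (G.src e) := by
      have := he.1; rw [hA] at this; simpa using this
    have hstep : (G.residual (ind S)).stepAvoid ∅ (G.src e) (G.tgt e) := by
      refine ⟨e, by simp, ?_, ?_⟩ <;> simp [residual, h0]
    exact he.2 (by simp [hA]; exact hsrcA.tail hstep)
  have hbwd : ∀ e ∈ G.cutE' A, ind S e = 0 := by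
    intro e he
    rw [mem_cutE'] at he
    by_contra hne
    have h1 : ind S e = 1 := by have := ind_le_one S e; omega
    have htgtA : (G.residual (ind S)).ReachAvoid ∅ s (G.tgt e) := by
      have := he.2; rw [hA] at this; simpa using this
    have hstep : (G.residual (ind S)).stepAvoid ∅ (G.tgt e) (G.src e) := by
      refine ⟨e, by simp, ?_, ?_⟩ <;> simp [residual, h1]
    exact he.1 (by simp [hA]; exact htgtA.tail hstep)
  have hcross := crossFlow hfS.2 hsA htA
  rw [hvS] at hcross
  have h1 : (∑ e ∈ G.cutE A, (ind S e : ℤ)) = (G.cutE A).card := by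
    rw [Finset.sum_congr rfl (fun e he => by rw [hfwd e he])]; simp
  have h2 : (∑ e ∈ G.cutE' A, (ind S e : ℤ)) = 0 := by
    rw [Finset.sum_congr rfl (fun e he => by rw [hbwd e he])]; simp
  rw [h1, h2] at hcross
  refine ⟨A, hsA, htA, ?_⟩
  have : ((G.cutE A).card : ℤ) = lam := by omega
  exact_mod_cast this

end Digraph'
namespace Digraph'

set_option linter.unusedSectionVars false
set_option maxHeartbeats 1000000

variable {V E : Type} [Fintype V] [DecidableEq V] [Fintype E] [DecidableEq E]
variable {G : Digraph' V E} {s t u v w : V} {lam : ℕ} {S : Finset E}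

lemma card_cutE_of_partition {A : Finset V} (hA : G.IsMinCutPartition s t lam A) :
    (G.cutE A).card = lam := hA.2.2

lemma lam_le_cut (hfS : G.IsFlow s t (ind S)) (hvS : G.flowValue s (ind S) = lam)
    {C : Finset E} (hC : G.IsCut s t C) : lam ≤ C.card := by
  have := weak_duality hfS hC
  rw [hvS] at this
  exact_mod_cast this

lemma mincut_of_partition (hfS : G.IsFlow s t (ind S)) (hvS : G.flowValue s (ind S) = lam)
    {A : Finset V} (hA : G.IsMinCutPartition s t lam A) : G.IsMinCut s t (G.cutE A) := by
  refine ⟨cut_of_partition hA.1 hA.2.1, fun C' hC' => ?_⟩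
  rw [card_cutE_of_partition hA]
  exact lam_le_cut hfS hvS hC'

lemma mincut_card (hst : s ≠ t) (hmax : G.IsMaxFlowValue s t ∅ lam)
    (hfS : G.IsFlow s t (ind S)) (hvS : G.flowValue s (ind S) = lam)
    {C : Finset E} (hC : G.IsMinCut s t C) : C.card = lam := by
  obtain ⟨A, hA⟩ := exists_mincut_partition hst hmax hfS hvS
  have h1 := hC.2 _ (cut_of_partition hA.1 hA.2.1)
  rw [card_cutE_of_partition hA] at h1
  exact le_antisymm h1 (lam_le_cut hfS hvS hC.1)

lemma mincut_partition_of_mincut (hst : s ≠ t) (hmax : G.IsMaxFlowValue s t ∅ lam)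
    (hfS : G.IsFlow s t (ind S)) (hvS : G.flowValue s (ind S) = lam)
    {C : Finset E} (hC : G.IsMinCut s t C) :
    ∃ A : Finset V, G.IsMinCutPartition s t lam A ∧ G.cutE A = C := by
  set A : Finset V := univ.filter (fun v => G.ReachAvoid C s v) with hA
  have hsA : s ∈ A := by simp [hA]; exact Relation.ReflTransGen.refl
  have htA : t ∉ A := by simp [hA]; exact hC.1
  have hsub : G.cutE A ⊆ C := by
    intro e he
    rw [mem_cutE] at he
    by_contra heC
    have hsrcA : G.ReachAvoid C s (G.src e) := by
      have := he.1; rw [hA] at this; simpa using this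
    exact he.2 (by simp [hA]; exact hsrcA.tail ⟨e, heC, rfl, rfl⟩)
  have hcard : C.card ≤ (G.cutE A).card := hC.2 _ (cut_of_partition hsA htA)
  have heq : G.cutE A = C := Finset.eq_of_subset_of_card_le hsub hcard
  refine ⟨A, ⟨hsA, htA, ?_⟩, heq⟩
  show (G.cutE A).card = lam
  rw [heq]
  exact mincut_card hst hmax hfS hvS hC

lemma saturation (hfS : G.IsFlow s t (ind S)) (hvS : G.flowValue s (ind S) = lam)
    {A : Finset V} (hA : G.IsMinCutPartition s t lam A) :
    (∀ e ∈ G.cutE A, ind S e = 1) ∧ (∀ e ∈ G.cutE' A, ind S e = 0) := by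
  have hcross := crossFlow hfS.2 hA.1 hA.2.1
  rw [hvS] at hcross
  have hcard : ((G.cutE A).card : ℤ) = lam := by exact_mod_cast card_cutE_of_partition hA
  have hub : (∑ e ∈ G.cutE A, (ind S e : ℤ)) ≤ (G.cutE A).card := by
    calc (∑ e ∈ G.cutE A, (ind S e : ℤ)) ≤ ∑ _e ∈ G.cutE A, (1:ℤ) :=
        Finset.sum_le_sum (fun e _ => by exact_mod_cast ind_le_one S e)
      _ = _ := by simp
  have hlb : (0:ℤ) ≤ ∑ e ∈ G.cutE' A, (ind S e : ℤ) :=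
    Finset.sum_nonneg (fun e _ => by positivity)
  have h1 : (∑ e ∈ G.cutE A, (ind S e : ℤ)) = (G.cutE A).card := by omega
  have h2 : (∑ e ∈ G.cutE' A, (ind S e : ℤ)) = 0 := by omega
  constructor
  · intro e he
    have hz : (∑ e ∈ G.cutE A, (1 - (ind S e : ℤ))) = 0 := by
      rw [Finset.sum_sub_distrib, h1]; simp
    have := (Finset.sum_eq_zero_iff_of_nonneg
      (fun e _ => by have := ind_le_one S e; omega)).mp hz e he
    omega
  · intro e he
    have := (Finset.sum_eq_zero_iff_of_nonneg
      (fun e _ => by positivity)).mp h2 e he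
    exact_mod_cast this

lemma critical_sat (hst : s ≠ t) (hmax : G.IsMaxFlowValue s t ∅ lam)
    (hfS : G.IsFlow s t (ind S)) (hvS : G.flowValue s (ind S) = lam)
    {e : E} (he : G.Critical s t e) : ind S e = 1 := by
  obtain ⟨C, hC, heC⟩ := he
  obtain ⟨A, hA, hAC⟩ := mincut_partition_of_mincut hst hmax hfS hvS hC
  exact (saturation hfS hvS hA).1 e (hAC ▸ heC)

lemma critical_of_mem_cutE (hfS : G.IsFlow s t (ind S)) (hvS : G.flowValue s (ind S) = lam)
    {A : Finset V} (hA : G.IsMinCutPartition s t lam A) {e : E} (he : e ∈ G.cutE A) :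
    G.Critical s t e := ⟨G.cutE A, mincut_of_partition hfS hvS hA, he⟩

lemma one_le_lam (hst : s ≠ t) (hpath : G.ReachAvoid ∅ s t) (hmax : G.IsMaxFlowValue s t ∅ lam) :
    1 ≤ lam := by
  obtain ⟨l₀, hc₀, -⟩ := reach_chn hpath
  obtain ⟨l, hc, -, hnd⟩ :=
    chn_nodup (p := fun _ => True) l₀.length l₀ s t le_rfl hc₀ (by simp)
  obtain ⟨hflow, hval⟩ := flow_of_chain hnd hc hst
  have := hmax.2 _ hflow (fun e he => absurd he (by simp))
  rw [hval] at this
  exact_mod_cast this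

end Digraph'
namespace Digraph'

set_option linter.unusedSectionVars false
set_option maxHeartbeats 1000000

variable {V E : Type} [Fintype V] [DecidableEq V] [Fintype E] [DecidableEq E]
variable {G : Digraph' V E} {s t u v w : V} {lam : ℕ} {S : Finset E}

lemma vequiv_symm (h : G.VEquiv s t lam u v) : G.VEquiv s t lam v u :=
  fun A hA => (h A hA).symm

lemma dstep_of_flow_one (hst : s ≠ t) (hmax : G.IsMaxFlowValue s t ∅ lam)
    (hfS : G.IsFlow s t (ind S)) (hvS : G.flowValue s (ind S) = lam)
    {e : E} (h1 : ind S e = 1) : G.DStep s t lam (G.src e) (G.tgt e) := by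
  by_cases hv : G.VEquiv s t lam (G.src e) (G.tgt e)
  · exact Or.inl hv
  · refine Or.inr ⟨e, hv, Or.inl ⟨?_, rfl, rfl⟩⟩
    unfold VEquiv at hv
    push_neg at hv
    obtain ⟨A, hA, hiff⟩ := hv
    rcases hiff with ⟨hsrc, htgt⟩ | ⟨hsrc, htgt⟩
    · exact critical_of_mem_cutE hfS hvS hA (mem_cutE.mpr ⟨hsrc, htgt⟩)
    · have := (saturation hfS hvS hA).2 e (mem_cutE'.mpr ⟨hsrc, htgt⟩)
      omega

lemma dstep_of_flow_zero (hst : s ≠ t) (hmax : G.IsMaxFlowValue s t ∅ lam)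
    (hfS : G.IsFlow s t (ind S)) (hvS : G.flowValue s (ind S) = lam)
    {e : E} (h0 : ind S e = 0) : G.DStep s t lam (G.tgt e) (G.src e) := by
  by_cases hv : G.VEquiv s t lam (G.src e) (G.tgt e)
  · exact Or.inl (vequiv_symm hv)
  · have hncrit : ¬ G.Critical s t e := by
      intro hc
      have := critical_sat hst hmax hfS hvS hc
      omega
    refine Or.inr ⟨e, hv, Or.inr ⟨hncrit, rfl, rfl⟩⟩

lemma dstep_mono (hst : s ≠ t) (hmax : G.IsMaxFlowValue s t ∅ lam)
    (hfS : G.IsFlow s t (ind S)) (hvS : G.flowValue s (ind S) = lam)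
    {A : Finset V} (hA : G.IsMinCutPartition s t lam A)
    (h : G.DStep s t lam u v) (hv : v ∈ A) : u ∈ A := by
  rcases h with h | ⟨e, hic, hends⟩
  · exact (h A hA).mpr hv
  · rcases hends with ⟨hcrit, hu, hv'⟩ | ⟨hncrit, hu, hv'⟩
    · subst hu; subst hv'
      by_contra hus
      have := (saturation hfS hvS hA).2 e (mem_cutE'.mpr ⟨hus, hv⟩)
      have := critical_sat hst hmax hfS hvS hcrit
      omega
    · subst hu; subst hv'
      by_contra hus
      exact hncrit (critical_of_mem_cutE hfS hvS hA (mem_cutE.mpr ⟨hv, hus⟩))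

lemma dreach_mono (hst : s ≠ t) (hmax : G.IsMaxFlowValue s t ∅ lam)
    (hfS : G.IsFlow s t (ind S)) (hvS : G.flowValue s (ind S) = lam)
    {A : Finset V} (hA : G.IsMinCutPartition s t lam A)
    (h : G.DReach s t lam u v) (hv : v ∈ A) : u ∈ A := by
  induction h with
  | refl => exact hv
  | tail hab hbc ih => exact ih (dstep_mono hst hmax hfS hvS hA hbc hv)

lemma not_dreach_tgt_src (hst : s ≠ t) (hmax : G.IsMaxFlowValue s t ∅ lam)
    (hfS : G.IsFlow s t (ind S)) (hvS : G.flowValue s (ind S) = lam)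
    {e : E} (hcrit : G.Critical s t e) : ¬ G.DReach s t lam (G.tgt e) (G.src e) := by
  intro h
  obtain ⟨C, hC, heC⟩ := hcrit
  obtain ⟨A, hA, hAC⟩ := mincut_partition_of_mincut hst hmax hfS hvS hC
  have he : e ∈ G.cutE A := hAC ▸ heC
  rw [mem_cutE] at he
  exact he.2 (dreach_mono hst hmax hfS hvS hA h he.1)

lemma exists_out (hfS : G.IsFlow s t (ind S)) (hxs : u ≠ s) (hxt : u ≠ t)
    (h : ∃ e ∈ S, G.tgt e = u) : ∃ e ∈ S, G.src e = u := by
  obtain ⟨e, heS, het⟩ := h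
  have h1 : 1 ≤ ∑ e ∈ univ.filter (fun e => G.tgt e = u), ind S e := by
    have hmem : e ∈ univ.filter (fun e => G.tgt e = u) := by simp [het]
    calc 1 = ind S e := (ind_eq_one.mpr heS).symm
      _ ≤ _ := Finset.single_le_sum (fun i _ => Nat.zero_le _) hmem
  rw [hfS.2 u hxs hxt] at h1
  by_contra hno
  push_neg at hno
  have : ∑ e ∈ univ.filter (fun e => G.src e = u), ind S e = 0 := by
    refine Finset.sum_eq_zero fun e' he' => ?_
    simp only [Finset.mem_filter, Finset.mem_univ, true_and] at he'
    by_contra hne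
    have : ind S e' = 1 := by have := ind_le_one S e'; omega
    exact hno e' (ind_eq_one.mp this) he'
  omega

lemma exists_in (hfS : G.IsFlow s t (ind S)) (hxs : u ≠ s) (hxt : u ≠ t)
    (h : ∃ e ∈ S, G.src e = u) : ∃ e ∈ S, G.tgt e = u := by
  obtain ⟨e, heS, het⟩ := h
  have h1 : 1 ≤ ∑ e ∈ univ.filter (fun e => G.src e = u), ind S e := by
    have hmem : e ∈ univ.filter (fun e => G.src e = u) := by simp [het]
    calc 1 = ind S e := (ind_eq_one.mpr heS).symm
      _ ≤ _ := Finset.single_le_sum (fun i _ => Nat.zero_le _) hmem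
  rw [← hfS.2 u hxs hxt] at h1
  by_contra hno
  push_neg at hno
  have : ∑ e ∈ univ.filter (fun e => G.tgt e = u), ind S e = 0 := by
    refine Finset.sum_eq_zero fun e' he' => ?_
    simp only [Finset.mem_filter, Finset.mem_univ, true_and] at he'
    by_contra hne
    have : ind S e' = 1 := by have := ind_le_one S e'; omega
    exact hno e' (ind_eq_one.mp this) he'
  omega

end Digraph'
namespace Digraph'

set_option linter.unusedSectionVars false
set_option maxHeartbeats 1000000

variable {V E : Type} [Fintype V] [DecidableEq V] [Fintype E] [DecidableEq E]
variable {G : Digraph' V E} {s t u v w : V} {lam : ℕ} {S : Finset E}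

/-- one step along a flow edge -/
def FStep (G : Digraph' V E) (S : Finset E) (a b : V) : Prop :=
  ∃ e ∈ S, G.src e = a ∧ G.tgt e = b

lemma transgen_chn (h : Relation.TransGen (G.FStep S) u v) :
    ∃ l : List E, l ≠ [] ∧ G.Chn l u v ∧ ∀ e ∈ l, e ∈ S := by
  induction h with
  | single hs =>
    obtain ⟨e, heS, h1, h2⟩ := hs
    exact ⟨[e], by simp, ⟨h1, h2⟩, by simpa using heS⟩
  | tail hab hbc ih =>
    obtain ⟨l, hne, hc, hp⟩ := ih
    obtain ⟨e, heS, h1, h2⟩ := hbc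
    refine ⟨l ++ [e], by simp, chn_append hc ⟨h1, h2⟩, ?_⟩
    intro e' he'
    rcases List.mem_append.mp he' with h | h
    · exact hp e' h
    · simpa using (by simpa using h) ▸ heS

lemma wf_fstep (hfS : G.IsFlow s t (ind S)) (hvS : G.flowValue s (ind S) = lam)
    (hmin : ∀ S' : Finset E, G.IsFlow s t (ind S') → G.flowValue s (ind S') = lam →
      S.card ≤ S'.card) :
    WellFounded (Relation.TransGen (G.FStep S)) := by
  have hirr : ∀ a, ¬ Relation.TransGen (G.FStep S) a a := by
    intro a h
    obtain ⟨l, hne, hc, hp⟩ := transgen_chn h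
    exact no_cycle hfS hvS hmin ⟨l, a, hne, hc, hp⟩
  haveI : IsTrans V (Relation.TransGen (G.FStep S)) := ⟨fun _ _ _ => Relation.TransGen.trans⟩
  haveI : IsIrrefl V (Relation.TransGen (G.FStep S)) := ⟨hirr⟩
  exact Finite.wellFounded_of_trans_of_irrefl _

lemma wf_fstep' (hfS : G.IsFlow s t (ind S)) (hvS : G.flowValue s (ind S) = lam)
    (hmin : ∀ S' : Finset E, G.IsFlow s t (ind S') → G.flowValue s (ind S') = lam →
      S.card ≤ S'.card) :
    WellFounded (flip (Relation.TransGen (G.FStep S))) := by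
  have hirr : ∀ a, ¬ Relation.TransGen (G.FStep S) a a := by
    intro a h
    obtain ⟨l, hne, hc, hp⟩ := transgen_chn h
    exact no_cycle hfS hvS hmin ⟨l, a, hne, hc, hp⟩
  haveI : IsTrans V (flip (Relation.TransGen (G.FStep S))) :=
    ⟨fun _ _ _ h1 h2 => Relation.TransGen.trans h2 h1⟩
  haveI : IsIrrefl V (flip (Relation.TransGen (G.FStep S))) := ⟨hirr⟩
  exact Finite.wellFounded_of_trans_of_irrefl _

section Walks

variable (hst : s ≠ t) (hmax : G.IsMaxFlowValue s t ∅ lam)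
  (hfS : G.IsFlow s t (ind S)) (hvS : G.flowValue s (ind S) = lam)
  (hmin : ∀ S' : Finset E, G.IsFlow s t (ind S') → G.flowValue s (ind S') = lam →
    S.card ≤ S'.card)

include hst hmax hfS hvS hmin

lemma dreach_s_of {B : Finset V} (hB : G.IsMinCutPartition s t lam B) :
    ∀ v, v ∈ B → (v = s ∨ ∃ e ∈ S, G.src e = v) → G.DReach s t lam s v := by
  intro v
  refine (wf_fstep hfS hvS hmin).induction
    (C := fun v => v ∈ B → (v = s ∨ ∃ e ∈ S, G.src e = v) → G.DReach s t lam s v) v ?_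
  intro x ih hxB hxflow
  by_cases hxs : x = s
  · subst hxs; exact Relation.ReflTransGen.refl
  rcases hxflow with h | hout
  · exact absurd h hxs
  have hxt : x ≠ t := fun h => hB.2.1 (h ▸ hxB)
  obtain ⟨e₀, he₀S, he₀t⟩ := exists_in hfS hxs hxt hout
  have he₀1 : ind S e₀ = 1 := ind_eq_one.mpr he₀S
  have hsrcB : G.src e₀ ∈ B := by
    by_contra h
    have := (saturation hfS hvS hB).2 e₀ (mem_cutE'.mpr ⟨h, he₀t ▸ hxB⟩)
    omega
  have hrec := ih (G.src e₀) (Relation.TransGen.single ⟨e₀, he₀S, rfl, he₀t⟩)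
    hsrcB (Or.inr ⟨e₀, he₀S, rfl⟩)
  have hstep := dstep_of_flow_one hst hmax hfS hvS he₀1
  rw [he₀t] at hstep
  exact hrec.tail hstep

lemma dreach_t_of {B : Finset V} (hB : G.IsMinCutPartition s t lam B) :
    ∀ v, v ∉ B → (v = t ∨ ∃ e ∈ S, G.tgt e = v) → G.DReach s t lam v t := by
  intro v
  refine (wf_fstep' hfS hvS hmin).induction
    (C := fun v => v ∉ B → (v = t ∨ ∃ e ∈ S, G.tgt e = v) → G.DReach s t lam v t) v ?_
  intro x ih hxB hxflow
  by_cases hxt : x = t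
  · subst hxt; exact Relation.ReflTransGen.refl
  rcases hxflow with h | hin
  · exact absurd h hxt
  have hxs : x ≠ s := fun h => hxB (h ▸ hB.1)
  obtain ⟨e₀, he₀S, he₀s⟩ := exists_out hfS hxs hxt hin
  have he₀1 : ind S e₀ = 1 := ind_eq_one.mpr he₀S
  have htgtB : G.tgt e₀ ∉ B := by
    intro h
    have := (saturation hfS hvS hB).2 e₀ (mem_cutE'.mpr ⟨he₀s ▸ hxB, h⟩)
    omega
  have hrec := ih (G.tgt e₀) (Relation.TransGen.single ⟨e₀, he₀S, he₀s, rfl⟩)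
    htgtB (Or.inr ⟨e₀, he₀S, rfl⟩)
  have hstep := dstep_of_flow_one hst hmax hfS hvS he₀1
  rw [he₀s] at hstep
  exact Relation.ReflTransGen.head hstep hrec

end Walks

end Digraph'
namespace Digraph'

set_option linter.unusedSectionVars false
set_option maxHeartbeats 1000000

variable {V E : Type} [Fintype V] [DecidableEq V] [Fintype E] [DecidableEq E]
variable {G : Digraph' V E} {s t u v w : V} {lam : ℕ} {S : Finset E}

section Walks2

variable (hst : s ≠ t) (hmax : G.IsMaxFlowValue s t ∅ lam)
  (hfS : G.IsFlow s t (ind S)) (hvS : G.flowValue s (ind S) = lam)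
  (hmin : ∀ S' : Finset E, G.IsFlow s t (ind S') → G.flowValue s (ind S') = lam →
    S.card ≤ S'.card)

include hst hmax hfS hvS hmin

lemma crit_dreach_s {e : E} (hcrit : G.Critical s t e) : G.DReach s t lam s (G.src e) := by
  obtain ⟨C, hC, heC⟩ := hcrit
  obtain ⟨A, hA, hAC⟩ := mincut_partition_of_mincut hst hmax hfS hvS hC
  have he : e ∈ G.cutE A := hAC ▸ heC
  have he1 := (saturation hfS hvS hA).1 e he
  exact dreach_s_of hst hmax hfS hvS hmin hA (G.src e) (mem_cutE.mp he).1
    (Or.inr ⟨e, ind_eq_one.mp he1, rfl⟩)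

lemma crit_dreach_t {e : E} (hcrit : G.Critical s t e) : G.DReach s t lam (G.tgt e) t := by
  obtain ⟨C, hC, heC⟩ := hcrit
  obtain ⟨A, hA, hAC⟩ := mincut_partition_of_mincut hst hmax hfS hvS hC
  have he : e ∈ G.cutE A := hAC ▸ heC
  have he1 := (saturation hfS hvS hA).1 e he
  exact dreach_t_of hst hmax hfS hvS hmin hA (G.tgt e) (mem_cutE.mp he).2
    (Or.inr ⟨e, ind_eq_one.mp he1, rfl⟩)

lemma fw_walk (hlam : 1 ≤ lam) {A : Finset V} (hA : G.IsMinCutPartition s t lam A) :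
    ∀ v, v ∈ A → (v = s ∨ ∃ e ∈ S, G.tgt e = v) →
      ∃ e ∈ G.cutE A, G.DReach s t lam v (G.src e) := by
  intro v
  refine (wf_fstep' hfS hvS hmin).induction
    (C := fun v => v ∈ A → (v = s ∨ ∃ e ∈ S, G.tgt e = v) →
      ∃ e ∈ G.cutE A, G.DReach s t lam v (G.src e)) v ?_
  intro x ih hxA hflow
  by_cases hxs : x = s
  · subst hxs
    obtain ⟨e, he⟩ := Finset.card_pos.mp (by rw [card_cutE_of_partition hA]; omega)
    have he1 := (saturation hfS hvS hA).1 e he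
    exact ⟨e, he, dreach_s_of hst hmax hfS hvS hmin hA (G.src e) (mem_cutE.mp he).1
      (Or.inr ⟨e, ind_eq_one.mp he1, rfl⟩)⟩
  rcases hflow with h | hin
  · exact absurd h hxs
  have hxt : x ≠ t := fun h => hA.2.1 (h ▸ hxA)
  obtain ⟨e₀, he₀S, he₀s⟩ := exists_out hfS hxs hxt hin
  have he₀1 : ind S e₀ = 1 := ind_eq_one.mpr he₀S
  by_cases htgtA : G.tgt e₀ ∈ A
  · obtain ⟨e, he, hre⟩ := ih (G.tgt e₀) (Relation.TransGen.single ⟨e₀, he₀S, he₀s, rfl⟩)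
      htgtA (Or.inr ⟨e₀, he₀S, rfl⟩)
    have hstep := dstep_of_flow_one hst hmax hfS hvS he₀1
    rw [he₀s] at hstep
    exact ⟨e, he, Relation.ReflTransGen.head hstep hre⟩
  · exact ⟨e₀, mem_cutE.mpr ⟨he₀s ▸ hxA, htgtA⟩, he₀s ▸ Relation.ReflTransGen.refl⟩

lemma bw_walk (hlam : 1 ≤ lam) {A : Finset V} (hA : G.IsMinCutPartition s t lam A) :
    ∀ v, v ∉ A → (v = t ∨ ∃ e ∈ S, G.src e = v) →
      ∃ e ∈ G.cutE A, G.DReach s t lam (G.tgt e) v := by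
  intro v
  refine (wf_fstep hfS hvS hmin).induction
    (C := fun v => v ∉ A → (v = t ∨ ∃ e ∈ S, G.src e = v) →
      ∃ e ∈ G.cutE A, G.DReach s t lam (G.tgt e) v) v ?_
  intro x ih hxA hflow
  by_cases hxt : x = t
  · subst hxt
    obtain ⟨e, he⟩ := Finset.card_pos.mp (by rw [card_cutE_of_partition hA]; omega)
    have he1 := (saturation hfS hvS hA).1 e he
    exact ⟨e, he, dreach_t_of hst hmax hfS hvS hmin hA (G.tgt e) (mem_cutE.mp he).2
      (Or.inr ⟨e, ind_eq_one.mp he1, rfl⟩)⟩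
  rcases hflow with h | hout
  · exact absurd h hxt
  have hxs : x ≠ s := fun h => hxA (h ▸ hA.1)
  obtain ⟨e₀, he₀S, he₀t⟩ := exists_in hfS hxs hxt hout
  have he₀1 : ind S e₀ = 1 := ind_eq_one.mpr he₀S
  by_cases hsrcA : G.src e₀ ∈ A
  · exact ⟨e₀, mem_cutE.mpr ⟨hsrcA, he₀t ▸ hxA⟩, he₀t ▸ Relation.ReflTransGen.refl⟩
  · obtain ⟨e, he, hre⟩ := ih (G.src e₀) (Relation.TransGen.single ⟨e₀, he₀S, rfl, he₀t⟩)
      hsrcA (Or.inr ⟨e₀, he₀S, rfl⟩)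
    have hstep := dstep_of_flow_one hst hmax hfS hvS he₀1
    rw [he₀t] at hstep
    exact ⟨e, he, hre.tail hstep⟩

end Walks2

end Digraph'
namespace Digraph'

set_option linter.unusedSectionVars false
set_option maxHeartbeats 1000000

variable {V E : Type} [Fintype V] [DecidableEq V] [Fintype E] [DecidableEq E]
variable {G : Digraph' V E} {s t u v w : V} {lam : ℕ} {S : Finset E}

section Main

variable (hst : s ≠ t) (hmax : G.IsMaxFlowValue s t ∅ lam)
  (hfS : G.IsFlow s t (ind S)) (hvS : G.flowValue s (ind S) = lam)
  (hmin : ∀ S' : Finset E, G.IsFlow s t (ind S') → G.flowValue s (ind S') = lam →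
    S.card ≤ S'.card)

include hst hmax hfS hvS hmin

lemma mincut_antichain {C : Finset E} (hC : G.IsMinCut s t C) :
    G.EdgeAntichain s t lam C := by
  intro e he e' he' hle
  rcases hle with h | ⟨u, v, u', v', hd, hd', h1, h2, h3⟩
  · exact h
  exfalso
  obtain ⟨A, hA, hAC⟩ := mincut_partition_of_mincut hst hmax hfS hvS hC
  have hcrit : G.Critical s t e := ⟨C, hC, he⟩
  have hcrit' : G.Critical s t e' := ⟨C, hC, he'⟩
  rcases hd with ⟨-, hu, hv⟩ | ⟨hnc, -, -⟩
  · rcases hd' with ⟨-, hu', hv'⟩ | ⟨hnc', -, -⟩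
    · subst hu; subst hv; subst hu'; subst hv'
      have heA : e ∈ G.cutE A := hAC ▸ he
      have heA' : e' ∈ G.cutE A := hAC ▸ he'
      exact (mem_cutE.mp heA).2
        (dreach_mono hst hmax hfS hvS hA h2 (mem_cutE.mp heA').1)
    · exact hnc' hcrit'
  · exact hnc hcrit

lemma mincut_maximal (hlam : 1 ≤ lam) {C : Finset E} (hC : G.IsMinCut s t C)
    {C' : Finset E} (hsub : C ⊆ C') (hcritC' : ∀ e ∈ C', G.Critical s t e)
    (hanti' : G.EdgeAntichain s t lam C') : C' = C := by
  refine Finset.Subset.antisymm ?_ hsub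
  intro e' he'
  by_contra he'C
  have hcritE' := hcritC' e' he'
  have h1' : ind S e' = 1 := critical_sat hst hmax hfS hvS hcritE'
  obtain ⟨A, hA, hAC⟩ := mincut_partition_of_mincut hst hmax hfS hvS hC
  by_cases hsrc : G.src e' ∈ A
  · by_cases htgt : G.tgt e' ∈ A
    · obtain ⟨e, heA, hre⟩ := fw_walk hst hmax hfS hvS hmin hlam hA (G.tgt e') htgt
        (Or.inr ⟨e', ind_eq_one.mp h1', rfl⟩)
      have heC : e ∈ C := hAC ▸ heA
      have hcritE : G.Critical s t e := ⟨C, hC, heC⟩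
      have hle : G.EdgeLE s t lam e' e :=
        Or.inr ⟨G.src e', G.tgt e', G.src e, G.tgt e,
          Or.inl ⟨hcritE', rfl, rfl⟩, Or.inl ⟨hcritE, rfl, rfl⟩,
          crit_dreach_s hst hmax hfS hvS hmin hcritE', hre,
          crit_dreach_t hst hmax hfS hvS hmin hcritE⟩
      have := hanti' e' he' e (hsub heC) hle
      exact he'C (this ▸ heC)
    · exact he'C (hAC ▸ (mem_cutE.mpr ⟨hsrc, htgt⟩))
  · obtain ⟨e, heA, hre⟩ := bw_walk hst hmax hfS hvS hmin hlam hA (G.src e') hsrc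
      (Or.inr ⟨e', ind_eq_one.mp h1', rfl⟩)
    have heC : e ∈ C := hAC ▸ heA
    have hcritE : G.Critical s t e := ⟨C, hC, heC⟩
    have hle : G.EdgeLE s t lam e e' :=
      Or.inr ⟨G.src e, G.tgt e, G.src e', G.tgt e',
        Or.inl ⟨hcritE, rfl, rfl⟩, Or.inl ⟨hcritE', rfl, rfl⟩,
        crit_dreach_s hst hmax hfS hvS hmin hcritE, hre,
        crit_dreach_t hst hmax hfS hvS hmin hcritE'⟩
    have := hanti' e (hsub heC) e' he' hle
    exact he'C (this ▸ heC)

lemma mincut_of_maximal_antichain (hlam : 1 ≤ lam) {C : Finset E}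
    (hcritC : ∀ e ∈ C, G.Critical s t e) (hanti : G.EdgeAntichain s t lam C)
    (hmaxl : ∀ C' : Finset E, C ⊆ C' → (∀ e ∈ C', G.Critical s t e) →
      G.EdgeAntichain s t lam C' → C' = C) : G.IsMinCut s t C := by
  have hCne : C.Nonempty := by
    rcases Finset.eq_empty_or_nonempty C with hCe | h
    · exfalso
      obtain ⟨A₀, hA₀⟩ := exists_mincut_partition hst hmax hfS hvS
      obtain ⟨e₀, he₀⟩ := Finset.card_pos.mp
        (by rw [card_cutE_of_partition hA₀]; omega)
      have hcrit₀ := critical_of_mem_cutE hfS hvS hA₀ he₀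
      have := hmaxl {e₀} (by simp [hCe]) (by simpa using hcrit₀)
        (by intro a ha b hb _; simp at ha hb; rw [ha, hb])
      rw [hCe] at this
      simp at this
    · exact h
  obtain ⟨e₀, he₀⟩ := hCne
  set A : Finset V :=
    univ.filter (fun x => ∀ e ∈ C, ¬ G.DReach s t lam (G.tgt e) x) with hAdef
  have hsA : s ∈ A := by
    simp only [hAdef, Finset.mem_filter, Finset.mem_univ, true_and]
    intro e heC h
    exact not_dreach_tgt_src hst hmax hfS hvS (hcritC e heC)
      (h.trans (crit_dreach_s hst hmax hfS hvS hmin (hcritC e heC)))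
  have htA : t ∉ A := by
    simp only [hAdef, Finset.mem_filter, Finset.mem_univ, true_and]
    push_neg
    exact ⟨e₀, he₀, crit_dreach_t hst hmax hfS hvS hmin (hcritC e₀ he₀)⟩
  have hmemA : ∀ x, x ∈ A ↔ ∀ e ∈ C, ¬ G.DReach s t lam (G.tgt e) x := by
    intro x; simp [hAdef]
  have hfwd : ∀ e'' ∈ G.cutE A, ind S e'' = 1 := by
    intro e'' he''
    rw [mem_cutE] at he''
    by_contra hne
    have h0 : ind S e'' = 0 := by have := ind_le_one S e''; omega
    have hnotA := he''.2
    simp only [hmemA] at hnotA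
    push_neg at hnotA
    obtain ⟨e, heC, hre⟩ := hnotA
    have hstep := dstep_of_flow_zero hst hmax hfS hvS h0
    exact ((hmemA (G.src e'')).mp he''.1 e heC) (hre.tail hstep)
  have hbwd : ∀ e'' ∈ G.cutE' A, ind S e'' = 0 := by
    intro e'' he''
    rw [mem_cutE'] at he''
    by_contra hne
    have h1 : ind S e'' = 1 := by have := ind_le_one S e''; omega
    have hnotA := he''.1
    simp only [hmemA] at hnotA
    push_neg at hnotA
    obtain ⟨e, heC, hre⟩ := hnotA
    have hstep := dstep_of_flow_one hst hmax hfS hvS h1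
    exact ((hmemA (G.tgt e'')).mp he''.2 e heC) (hre.tail hstep)
  have hA : G.IsMinCutPartition s t lam A := by
    have hcross := crossFlow hfS.2 hsA htA
    rw [hvS] at hcross
    have h1 : (∑ e ∈ G.cutE A, (ind S e : ℤ)) = (G.cutE A).card := by
      rw [Finset.sum_congr rfl (fun e he => by rw [hfwd e he])]; simp
    have h2 : (∑ e ∈ G.cutE' A, (ind S e : ℤ)) = 0 := by
      rw [Finset.sum_congr rfl (fun e he => by rw [hbwd e he])]; simp
    rw [h1, h2] at hcross
    refine ⟨hsA, htA, ?_⟩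
    have : ((G.cutE A).card : ℤ) = lam := by omega
    exact_mod_cast this
  have hsubC : C ⊆ G.cutE A := by
    intro e heC
    rw [mem_cutE]
    constructor
    · rw [hmemA]
      intro e₂ he₂ h
      have hle : G.EdgeLE s t lam e₂ e :=
        Or.inr ⟨G.src e₂, G.tgt e₂, G.src e, G.tgt e,
          Or.inl ⟨hcritC e₂ he₂, rfl, rfl⟩, Or.inl ⟨hcritC e heC, rfl, rfl⟩,
          crit_dreach_s hst hmax hfS hvS hmin (hcritC e₂ he₂), h,
          crit_dreach_t hst hmax hfS hvS hmin (hcritC e heC)⟩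
      have heq := hanti e₂ he₂ e heC hle
      subst heq
      exact not_dreach_tgt_src hst hmax hfS hvS (hcritC e₂ he₂) h
    · rw [hmemA]
      push_neg
      exact ⟨e, heC, Relation.ReflTransGen.refl⟩
  have hCA : G.cutE A = C :=
    hmaxl (G.cutE A) hsubC (fun e he => critical_of_mem_cutE hfS hvS hA he)
      (mincut_antichain hst hmax hfS hvS hmin (mincut_of_partition hfS hvS hA))
  exact hCA ▸ mincut_of_partition hfS hvS hA

end Main

end Digraph'
/-- Assume every vertex of `G` lies on a directed `(s,t)`-path.
A set `C` of edges of `G` is an `(s,t)`-min-cut iff every edge of `C` is critical and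
`C`, regarded as a set of edges of the strip graph `D_λ`, is an antichain that is
maximal among the antichains of `D_λ` consisting of critical edges. -/
theorem stmt14 {V E : Type} [Fintype V] [DecidableEq V] [Fintype E] [DecidableEq E]
    (G : Digraph' V E) (s t : V) (hst : s ≠ t)
    (hpath : ∀ v : V, G.ReachAvoid ∅ s v ∧ G.ReachAvoid ∅ v t)
    (lam : ℕ) (hmax : G.IsMaxFlowValue s t ∅ lam)
    (C : Finset E) :
    G.IsMinCut s t C ↔
      (∀ e ∈ C, G.Critical s t e) ∧ G.EdgeAntichain s t lam C ∧
      (∀ C' : Finset E, C ⊆ C' → (∀ e ∈ C', G.Critical s t e) →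
        G.EdgeAntichain s t lam C' → C' = C) := by
  obtain ⟨S, hfS, hvS, hmin⟩ := Digraph'.exists_min_flow hmax
  have hlam : 1 ≤ lam := Digraph'.one_le_lam hst (hpath t).1 hmax
  constructor
  · intro hC
    exact ⟨fun e he => ⟨C, hC, he⟩,
      Digraph'.mincut_antichain hst hmax hfS hvS hmin hC,
      fun C' hsub hcrit' hanti' =>
        Digraph'.mincut_maximal hst hmax hfS hvS hmin hlam hC hsub hcrit' hanti'⟩
  · rintro ⟨h1, h2, h3⟩
    exact Digraph'.mincut_of_maximal_antichain hst hmax hfS hvS hmin hlam h1 h2 h3
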